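/- Let R be a (possibly noncommutative) ring equipped with an involution τ satisfying τ(a+b) = τ(a)+τ(b), τ(ab) = τ(b)τ(a), and τ(τ(a)) = a. For a sequence x : ℕ → R define its star sequence x* : ℕ → R recursively by x*₀ = x*₁ = 0 and, for l ≥ 2, x*_l = ∑_{r+s=l, r,s≥1} τ(x_s)·τ(x_r) − ∑_{r+s=l, r,s≥1} τ(x_s)·x*_r, and set L(x)_b = τ(x_b) − x*_b. Given two sequences x, y : ℕ → R, define z : ℕ → R by z_m = x_m + y_m + ∑_{a+b=m, a,b≥1} x_a·y_b. Then for every n ≥ 1: ∑_{a+b=n, a,b≥1} τ(z_a)·(τ(z_b) − z*_b) = x*_n + y*_n + ∑_{a+b=n, a,b≥1} τ(y_a)·τ(x_b) + ∑_{a+b=n, a,b≥1} (τ(x_a) − x*_a)·(τ(y_b) − y*_b), where z* is the star sequence of z defined by the same recursion. -/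

import Mathlib

/-- The "star sequence" `x*` of a sequence `x` in a ring with an involution `τ`:
`x*₀ = x*₁ = 0` and, for `l ≥ 2`,
`x*_l = ∑_{r+s=l, r,s≥1} τ(x_s)·τ(x_r) − ∑_{r+s=l, r,s≥1} τ(x_s)·x*_r`. -/
def starSeq {R : Type*} [Ring R] (τ : R → R) (x : ℕ → R) : ℕ → R
  | 0 => 0
  | 1 => 0
  | l + 2 =>
    (∑ r ∈ Finset.Ioo 0 (l + 2), τ (x (l + 2 - r)) * τ (x r)) -
      ∑ r ∈ (Finset.Ioo 0 (l + 2)).attach, τ (x (l + 2 - r.1)) * starSeq τ x r.1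
  termination_by l => l
  decreasing_by
    have := r.2
    simp only [Finset.mem_Ioo] at this
    omega

section StarSeqAux
variable {R : Type*} [Ring R]

private def cnv (f g : ℕ → R) (n : ℕ) : R := ∑ a ∈ Finset.Ioo 0 n, f a * g (n - a)

private lemma sum_Ioo_reflect (h : ℕ → R) (n : ℕ) :
    ∑ a ∈ Finset.Ioo 0 n, h a = ∑ a ∈ Finset.Ioo 0 n, h (n - a) := by
  refine Finset.sum_nbij' (fun a => n - a) (fun a => n - a) ?_ ?_ ?_ ?_ ?_ <;>
      intro a ha <;> simp only [Finset.mem_Ioo] at ha ⊢ <;> try omega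
  have : n - (n - a) = a := by omega
  rw [this]

private lemma cnv_congr (f f' g g' : ℕ → R) (n : ℕ)
    (hf : ∀ a, 0 < a → a < n → f a = f' a) (hg : ∀ a, 0 < a → a < n → g a = g' a) :
    cnv f g n = cnv f' g' n := by
  refine Finset.sum_congr rfl fun a ha => ?_
  simp only [Finset.mem_Ioo] at ha
  rw [hf a ha.1 ha.2, hg (n - a) (by omega) (by omega)]

private lemma cnv_add_right (f g g' : ℕ → R) (n : ℕ) :
    cnv f (fun a => g a + g' a) n = cnv f g n + cnv f g' n := by
  simp [cnv, mul_add, Finset.sum_add_distrib]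

private lemma cnv_sub_right (f g g' : ℕ → R) (n : ℕ) :
    cnv f (fun a => g a - g' a) n = cnv f g n - cnv f g' n := by
  simp [cnv, mul_sub, Finset.sum_sub_distrib]

private lemma cnv_add_left (f f' g : ℕ → R) (n : ℕ) :
    cnv (fun a => f a + f' a) g n = cnv f g n + cnv f' g n := by
  simp [cnv, add_mul, Finset.sum_add_distrib]

private lemma cnv_assoc (f g h : ℕ → R) (n : ℕ) :
    cnv (fun m => cnv f g m) h n = cnv f (fun m => cnv g h m) n := by
  unfold cnv
  simp only [Finset.sum_mul, Finset.mul_sum]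
  rw [Finset.sum_sigma', Finset.sum_sigma']
  refine Finset.sum_nbij' (fun p => ⟨p.2, p.1 - p.2⟩) (fun p => ⟨p.1 + p.2, p.1⟩) ?_ ?_ ?_ ?_ ?_
  · rintro ⟨a, b⟩ ha
    simp only [Finset.mem_sigma, Finset.mem_Ioo] at *
    omega
  · rintro ⟨a, b⟩ ha
    simp only [Finset.mem_sigma, Finset.mem_Ioo] at *
    omega
  · rintro ⟨a, b⟩ ha
    simp only [Finset.mem_sigma, Finset.mem_Ioo] at ha
    have : b + (a - b) = a := by omega
    simp [this]
  · rintro ⟨a, b⟩ ha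
    simp only [Finset.mem_sigma, Finset.mem_Ioo] at ha
    simp [Nat.add_sub_cancel_left]
  · rintro ⟨a, b⟩ ha
    simp only [Finset.mem_sigma, Finset.mem_Ioo] at ha
    have h2 : n - b - (a - b) = n - a := by omega
    rw [mul_assoc, h2]

private lemma starSeq_eq (τ : R → R) (x : ℕ → R) (n : ℕ) :
    starSeq τ x n = cnv (fun a => τ (x a)) (fun a => τ (x a) - starSeq τ x a) n := by
  match n with
  | 0 => simp [starSeq, cnv]
  | 1 =>
    rw [show starSeq τ x 1 = 0 by simp [starSeq], cnv]
    exact (Finset.sum_eq_zero (fun i hi => by simp only [Finset.mem_Ioo] at hi; omega)).symm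
  | l + 2 =>
    rw [starSeq,
      Finset.sum_attach (Finset.Ioo 0 (l + 2)) (fun r => τ (x (l + 2 - r)) * starSeq τ x r),
      cnv,
      sum_Ioo_reflect
        (fun a => τ (x a) * (τ (x (l + 2 - a)) - starSeq τ x (l + 2 - a))) (l + 2),
      ← Finset.sum_sub_distrib]
    refine Finset.sum_congr rfl fun a ha => ?_
    simp only [Finset.mem_Ioo] at ha
    have h1 : l + 2 - (l + 2 - a) = a := by omega
    rw [h1, mul_sub]

private lemma alg (f F g G : ℕ → R)
    (hf : ∀ a, f a = F a + cnv f F a) (n : ℕ) :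
    cnv (fun a => f a + g a + cnv g f a) (fun a => F a + G a - cnv F G a) n =
      cnv f F n + cnv g G n + cnv g f n + cnv F G n := by
  have hfe : ∀ m, cnv f G m = cnv F G m + cnv f (fun k => cnv F G k) m := by
    intro m
    rw [cnv_congr f (fun a => F a + cnv f F a) G G m (fun a _ _ => hf a) (fun _ _ _ => rfl),
        cnv_add_left, cnv_assoc]
  have hgf : cnv g f n = cnv g F n + cnv g (fun m => cnv f F m) n := by
    rw [cnv_congr g g f (fun a => F a + cnv f F a) n (fun _ _ _ => rfl) (fun a _ _ => hf a),
        cnv_add_right]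
  have h7 : cnv (fun m => cnv g f m) F n = cnv g (fun m => cnv f F m) n := cnv_assoc g f F n
  have h9 : cnv (fun m => cnv g f m) (fun m => cnv F G m) n
      = cnv g (fun m => cnv f (fun k => cnv F G k) m) n := cnv_assoc g f (fun m => cnv F G m) n
  have h8 : cnv (fun m => cnv g f m) G n
      = cnv g (fun m => cnv F G m) n + cnv g (fun m => cnv f (fun k => cnv F G k) m) n := by
    rw [cnv_assoc,
        cnv_congr g g (fun m => cnv f G m)
          (fun m => cnv F G m + cnv f (fun k => cnv F G k) m) n
          (fun _ _ _ => rfl) (fun a _ _ => hfe a),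
        cnv_add_right]
  rw [cnv_add_left, cnv_add_left, cnv_sub_right, cnv_sub_right, cnv_sub_right,
      cnv_add_right, cnv_add_right, cnv_add_right, hfe n, h7, h8, h9, hgf]
  abel

private lemma main_lemma (τ : R → R)
    (hadd : ∀ a b, τ (a + b) = τ a + τ b)
    (hmul : ∀ a b, τ (a * b) = τ b * τ a)
    (x y : ℕ → R) (n : ℕ) :
    starSeq τ (fun m => x m + y m + ∑ a ∈ Finset.Ioo 0 m, x a * y (m - a)) n =
      starSeq τ x n + starSeq τ y n +
      cnv (fun a => τ (y a)) (fun a => τ (x a)) n +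
      cnv (fun a => τ (x a) - starSeq τ x a) (fun a => τ (y a) - starSeq τ y a) n := by
  set z : ℕ → R := fun m => x m + y m + ∑ a ∈ Finset.Ioo 0 m, x a * y (m - a) with hz
  have h0 : τ 0 = 0 := by
    have := hadd 0 0
    rw [add_zero] at this
    exact (left_eq_add.mp this)
  have tsum : ∀ (s : Finset ℕ) (f : ℕ → R), τ (∑ i ∈ s, f i) = ∑ i ∈ s, τ (f i) := by
    intro s f
    induction s using Finset.cons_induction with
    | empty => simpa using h0
    | cons a s ha ih => rw [Finset.sum_cons, Finset.sum_cons, hadd, ih]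
  have hA : ∀ m, τ (z m) =
      τ (x m) + τ (y m) + cnv (fun a => τ (y a)) (fun a => τ (x a)) m := by
    intro m
    rw [hz]
    simp only []
    rw [hadd, hadd, tsum]
    congr 1
    rw [cnv, sum_Ioo_reflect (fun a => τ (y a) * τ (x (m - a))) m]
    refine Finset.sum_congr rfl fun a ha => ?_
    simp only [Finset.mem_Ioo] at ha
    rw [hmul]
    have : m - (m - a) = a := by omega
    rw [this]
  have hfx : ∀ a, τ (x a) = (τ (x a) - starSeq τ x a)
      + cnv (fun b => τ (x b)) (fun b => τ (x b) - starSeq τ x b) a := by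
    intro a
    rw [← starSeq_eq]
    abel
  induction n using Nat.strong_induction_on with
  | _ n ih =>
    rw [starSeq_eq τ z n,
      cnv_congr (fun a => τ (z a))
        (fun a => τ (x a) + τ (y a) + cnv (fun b => τ (y b)) (fun b => τ (x b)) a)
        (fun a => τ (z a) - starSeq τ z a)
        (fun a => (τ (x a) - starSeq τ x a) + (τ (y a) - starSeq τ y a) -
          cnv (fun b => τ (x b) - starSeq τ x b) (fun b => τ (y b) - starSeq τ y b) a) n
        (fun a _ _ => hA a)
        (fun a _ hlt => by simp only [hA a, ih a hlt]; abel)]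
    have halg := alg (fun b => τ (x b)) (fun b => τ (x b) - starSeq τ x b)
      (fun b => τ (y b)) (fun b => τ (y b) - starSeq τ y b) hfx n
    rw [halg, ← starSeq_eq, ← starSeq_eq]

end StarSeqAux

/-- the algebraic identity in a ring with involution `τ`:
with `L(w)_b = τ(w_b) − w*_b` and `z_m = x_m + y_m + ∑_{a+b=m, a,b≥1} x_a y_b`,
for all `n ≥ 1`,
`∑_{a+b=n} τ(z_a) L(z)_b = x*_n + y*_n + ∑_{a+b=n} τ(y_a) τ(x_b) + ∑_{a+b=n} L(x)_a L(y)_b`. -/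
theorem stmt_19 {R : Type*} [Ring R] (τ : R → R)
    (hadd : ∀ a b, τ (a + b) = τ a + τ b)
    (hmul : ∀ a b, τ (a * b) = τ b * τ a)
    (hinv : ∀ a, τ (τ a) = a)
    (x y : ℕ → R) (n : ℕ) (hn : 1 ≤ n) :
    let z : ℕ → R := fun m => x m + y m + ∑ a ∈ Finset.Ioo 0 m, x a * y (m - a)
    ∑ a ∈ Finset.Ioo 0 n, τ (z a) * (τ (z (n - a)) - starSeq τ z (n - a)) =
      starSeq τ x n + starSeq τ y n +
        (∑ a ∈ Finset.Ioo 0 n, τ (y a) * τ (x (n - a))) +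
        ∑ a ∈ Finset.Ioo 0 n,
          (τ (x a) - starSeq τ x a) * (τ (y (n - a)) - starSeq τ y (n - a)) := by
  intro z
  have h1 : (∑ a ∈ Finset.Ioo 0 n, τ (z a) * (τ (z (n - a)) - starSeq τ z (n - a)))
      = cnv (fun a => τ (z a)) (fun a => τ (z a) - starSeq τ z a) n := rfl
  rw [h1, ← starSeq_eq τ z n]
  have := main_lemma τ hadd hmul x y n
  simp only [cnv] at this
  exact this
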